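/- (Theorem 3, HOCBF based on constraint transformation.) Let b, b_T : ℝⁿ → ℝ be such that for every z ∈ ℝⁿ, b_T(z) ≥ 0 implies b(z) ≥ 0. Let x : ℝ → ℝⁿ be a trajectory such that ψ₀(t) := b_T(x(t)) is m-times differentiable, let α₁,…,αₘ : ℝ → ℝ be extended class K functions (strictly increasing with αᵢ(0) = 0, with αᵢ (m−i)-times continuously differentiable for i ≤ m−1), and define ψᵢ(t) = ψᵢ₋₁'(t) + αᵢ(ψᵢ₋₁(t)) for i = 1,…,m. If ψᵢ(0) ≥ 0 for every i = 0,…,m−1 and ψₘ(t) ≥ 0 for all t ≥ 0, then b(x(t)) ≥ 0 for all t ≥ 0. -/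

import Mathlib

def Wk (j : ℕ) (f : ℝ → ℝ) : Prop := ∀ k < j, Differentiable ℝ (deriv^[k] f)

lemma Wk_mono {j j' : ℕ} {f : ℝ → ℝ} (h : Wk j f) (hle : j' ≤ j) : Wk j' f :=
  fun k hk => h k (lt_of_lt_of_le hk hle)

lemma Wk_succ_iff {j : ℕ} {f : ℝ → ℝ} :
    Wk (j + 1) f ↔ Differentiable ℝ f ∧ Wk j (deriv f) := by
  constructor
  · intro h
    refine ⟨h 0 (Nat.succ_pos _), fun k hk => ?_⟩
    have := h (k + 1) (by omega)
    rwa [Function.iterate_succ_apply] at this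
  · rintro ⟨h0, h⟩ k hk
    cases k with
    | zero => exact h0
    | succ k => rw [Function.iterate_succ_apply]; exact h k (by omega)

lemma Wk_diff {j : ℕ} {f : ℝ → ℝ} (h : Wk j f) (hj : 1 ≤ j) : Differentiable ℝ f :=
  h 0 hj

lemma Wk_add {j : ℕ} {f g : ℝ → ℝ} (hf : Wk j f) (hg : Wk j g) : Wk j (f + g) := by
  induction j generalizing f g with
  | zero => intro k hk; omega
  | succ j ih =>
    rw [Wk_succ_iff] at hf hg ⊢
    refine ⟨hf.1.add hg.1, ?_⟩
    have : deriv (f + g) = deriv f + deriv g := by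
      funext t; exact deriv_add (hf.1 t) (hg.1 t)
    rw [this]; exact ih hf.2 hg.2

lemma Wk_mul {j : ℕ} {f g : ℝ → ℝ} (hf : Wk j f) (hg : Wk j g) : Wk j (f * g) := by
  induction j generalizing f g with
  | zero => intro k hk; omega
  | succ j ih =>
    have hfj : Wk j f := Wk_mono hf j.le_succ
    have hgj : Wk j g := Wk_mono hg j.le_succ
    rw [Wk_succ_iff] at hf hg ⊢
    refine ⟨hf.1.mul hg.1, ?_⟩
    have : deriv (f * g) = deriv f * g + f * deriv g := by
      funext t
      show deriv (fun x => f x * g x) t = _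
      rw [deriv_fun_mul (hf.1 t) (hg.1 t)]; rfl
    rw [this]
    exact Wk_add (ih hf.2 hgj) (ih hfj hg.2)

lemma Wk_comp {j : ℕ} {a f : ℝ → ℝ} (ha : ContDiff ℝ (j : ℕ∞) a) (hf : Wk j f) :
    Wk j (a ∘ f) := by
  induction j generalizing a f with
  | zero => intro k hk; omega
  | succ j ih =>
    have ha' : ContDiff ℝ ((j : ℕ∞) + 1) a := by exact_mod_cast ha
    rw [contDiff_succ_iff_deriv] at ha'
    have hfj : Wk j f := Wk_mono hf j.le_succ
    rw [Wk_succ_iff] at hf ⊢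
    refine ⟨ha'.1.comp hf.1, ?_⟩
    have : deriv (a ∘ f) = (deriv a ∘ f) * deriv f := by
      funext t
      exact deriv_comp t (ha'.1.differentiableAt) (hf.1 t)
    rw [this]
    exact Wk_mul (ih ha'.2.2 hfj) hf.2

lemma key_comparison {f a : ℝ → ℝ} (hf : Differentiable ℝ f) (ha : StrictMono a)
    (ha0 : a 0 = 0) (h0 : f 0 ≥ 0) (h : ∀ t, 0 ≤ t → deriv f t + a (f t) ≥ 0) :
    ∀ t, 0 ≤ t → f t ≥ 0 := by
  intro t0 ht0
  by_contra hneg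
  push_neg at hneg
  let S : Set ℝ := Set.Icc 0 t0 ∩ f ⁻¹' Set.Ici 0
  have hSne : S.Nonempty := ⟨0, ⟨le_refl 0, ht0⟩, h0⟩
  have hSbdd : BddAbove S := BddAbove.mono (Set.inter_subset_left) (bddAbove_Icc)
  have hSclosed : IsClosed S :=
    (isClosed_Icc).inter (IsClosed.preimage hf.continuous isClosed_Ici)
  let s := sSup S
  have hsS : s ∈ S := hSclosed.csSup_mem hSne hSbdd
  have hfs : f s ≥ 0 := hsS.2
  have hst0 : s ≤ t0 := hsS.1.2
  have hslt : s < t0 := by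
    rcases lt_or_eq_of_le hst0 with h' | h'
    · exact h'
    · exact absurd (h' ▸ hfs) (not_le.mpr hneg)
  have hs0 : 0 ≤ s := hsS.1.1
  have hlt : ∀ u, s < u → u ≤ t0 → f u < 0 := by
    intro u hu hu'
    by_contra hfu
    push_neg at hfu
    have : u ∈ S := ⟨⟨le_trans hs0 hu.le, hu'⟩, hfu⟩
    exact absurd (le_csSup hSbdd this) (not_le.mpr hu)
  have hmono : StrictMonoOn f (Set.Icc s t0) := by
    apply strictMonoOn_of_deriv_pos (convex_Icc s t0) hf.continuous.continuousOn
    intro u hu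
    rw [interior_Icc] at hu
    have hfu : f u < 0 := hlt u hu.1 hu.2.le
    have hau : a (f u) < 0 := by
      have := ha hfu
      rwa [ha0] at this
    have := h u (le_trans hs0 hu.1.le)
    linarith
  have := hmono ⟨le_refl s, hst0⟩ ⟨hst0, le_refl t0⟩ hslt
  linarith

theorem hocbf_constraint_transformation
    (n : ℕ) (b bT : (Fin n → ℝ) → ℝ)
    (himp : ∀ z : Fin n → ℝ, bT z ≥ 0 → b z ≥ 0)
    (x : ℝ → Fin n → ℝ)
    (m : ℕ) (hm : 1 ≤ m)
    (α : ℕ → ℝ → ℝ)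
    (hα_mono : ∀ i, 1 ≤ i → i ≤ m → StrictMono (α i))
    (hα_zero : ∀ i, 1 ≤ i → i ≤ m → α i 0 = 0)
    (hα_smooth : ∀ i, 1 ≤ i → i ≤ m - 1 → ContDiff ℝ ((m - i : ℕ) : ℕ∞) (α i))
    (ψ : ℕ → ℝ → ℝ)
    (hψ0 : ∀ t : ℝ, ψ 0 t = bT (x t))
    (hψ0_diff : ∀ k < m, Differentiable ℝ (deriv^[k] (ψ 0)))
    (hψ_def : ∀ i, 1 ≤ i → i ≤ m →
      ∀ t : ℝ, ψ i t = deriv (ψ (i - 1)) t + α i (ψ (i - 1) t))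
    (hinit : ∀ i < m, ψ i 0 ≥ 0)
    (hconstr : ∀ t : ℝ, 0 ≤ t → ψ m t ≥ 0) :
    ∀ t : ℝ, 0 ≤ t → b (x t) ≥ 0 := by
  -- Step 1: smoothness of each ψ i
  have hW : ∀ i ≤ m, Wk (m - i) (ψ i) := by
    intro i
    induction i with
    | zero => intro _; exact hψ0_diff
    | succ i ih =>
      intro him
      have hi : i ≤ m := by omega
      have hWi : Wk (m - i) (ψ i) := ih hi
      have heq : ψ (i + 1) = deriv (ψ i) + α (i + 1) ∘ ψ i := by
        funext t
        have := hψ_def (i + 1) (by omega) him t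
        simpa using this
      rw [heq]
      by_cases hc : i + 1 = m
      · intro k hk; omega
      · have hsmooth : ContDiff ℝ ((m - (i + 1) : ℕ) : ℕ∞) (α (i + 1)) :=
          hα_smooth (i + 1) (by omega) (by omega)
        have h1 : Wk (m - (i + 1)) (deriv (ψ i)) := by
          have : Wk (m - i) (ψ i) := hWi
          have := (Wk_succ_iff (j := m - (i+1)) (f := ψ i)).mp
            (by rw [show m - (i+1) + 1 = m - i by omega]; exact hWi)
          exact this.2
        have h2 : Wk (m - (i + 1)) (α (i + 1) ∘ ψ i) :=
          Wk_comp hsmooth (Wk_mono hWi (by omega))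
        exact Wk_add h1 h2
  -- Step 2: downward induction on the chain
  have hchain : ∀ j ≤ m, ∀ t, 0 ≤ t → ψ (m - j) t ≥ 0 := by
    intro j
    induction j with
    | zero => intro _ t ht; simpa using hconstr t ht
    | succ j ih =>
      intro hjm t ht
      have hprev : ∀ t, 0 ≤ t → ψ (m - j) t ≥ 0 := ih (by omega)
      set i := m - (j + 1) with hi
      have him : i + 1 = m - j := by omega
      have hi1 : 1 ≤ i + 1 := by omega
      have hi1m : i + 1 ≤ m := by omega
      have hdiff : Differentiable ℝ (ψ i) :=
        Wk_diff (hW i (by omega)) (by omega)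
      apply key_comparison hdiff (hα_mono (i + 1) hi1 hi1m) (hα_zero (i + 1) hi1 hi1m)
        (hinit i (by omega)) _ t ht
      intro u hu
      have := hprev u hu
      rw [← him] at this
      have hd := hψ_def (i + 1) hi1 hi1m u
      simp only [Nat.add_sub_cancel] at hd
      linarith [this, hd.ge, hd.le]
  have h0 : ∀ t, 0 ≤ t → ψ 0 t ≥ 0 := by
    have := hchain m (le_refl m)
    simpa using this
  intro t ht
  apply himp
  rw [← hψ0]
  exact h0 t ht
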